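/- Fix n ≥ 2, U ∈ U(n-1), a ∈ ℂ^{n-1}, β ∈ ℝ. The map g(z', z_n) = (Uz' + a, e^{iβ} exp(2⟨Uz', a⟩ + |a|²) z_n) maps the hypersurface δ = {(z', z_n) ∈ ℂ^{n-1} × ℂ : |z_n| = exp(|z'|²)} bijectively onto itself. -/

import Mathlib

open Complex

variable {m : ℕ}

lemma teL_mul_apply (A B : Matrix (Fin m) (Fin m) ℂ) (v : EuclideanSpace ℂ (Fin m)) :
    Matrix.toEuclideanLin (A * B) v = Matrix.toEuclideanLin A (Matrix.toEuclideanLin B v) := by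
  simp [Matrix.toEuclideanLin_apply, Matrix.mulVec_mulVec]

lemma teL_one_apply (v : EuclideanSpace ℂ (Fin m)) :
    Matrix.toEuclideanLin (1 : Matrix (Fin m) (Fin m) ℂ) v = v := by
  simp [Matrix.toEuclideanLin_apply]

lemma teL_norm (M : Matrix (Fin m) (Fin m) ℂ) (hM : star M * M = 1)
    (v : EuclideanSpace ℂ (Fin m)) :
    ‖Matrix.toEuclideanLin M v‖ = ‖v‖ := by
  have h : (inner ℂ (Matrix.toEuclideanLin M v) (Matrix.toEuclideanLin M v) : ℂ)
      = inner ℂ v v := by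
    rw [← LinearMap.adjoint_inner_right, ← Matrix.toEuclideanLin_conjTranspose_eq_adjoint,
      ← teL_mul_apply, ← Matrix.star_eq_conjTranspose, hM, teL_one_apply]
  rw [norm_eq_sqrt_re_inner (𝕜 := ℂ), norm_eq_sqrt_re_inner (𝕜 := ℂ), h]

theorem stmt_7 (n : ℕ) (hn : 2 ≤ n)
    (U : Matrix.unitaryGroup (Fin (n - 1)) ℂ)
    (a : EuclideanSpace ℂ (Fin (n - 1))) (β : ℝ) :
    Set.BijOn
      (fun p : EuclideanSpace ℂ (Fin (n - 1)) × ℂ =>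
        ((Matrix.toEuclideanLin (U : Matrix (Fin (n - 1)) (Fin (n - 1)) ℂ) p.1) + a,
          Complex.exp ((β : ℂ) * Complex.I)
            * Complex.exp (2 * (inner ℂ a (Matrix.toEuclideanLin (U : Matrix (Fin (n - 1)) (Fin (n - 1)) ℂ) p.1) : ℂ) + (‖a‖ : ℂ) ^ 2)
            * p.2))
      {p : EuclideanSpace ℂ (Fin (n - 1)) × ℂ | ‖p.2‖ = Real.exp (‖p.1‖ ^ 2)}
      {p : EuclideanSpace ℂ (Fin (n - 1)) × ℂ | ‖p.2‖ = Real.exp (‖p.1‖ ^ 2)} := by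
  set M : Matrix (Fin (n - 1)) (Fin (n - 1)) ℂ := (U : Matrix (Fin (n - 1)) (Fin (n - 1)) ℂ)
    with hMdef
  have hU1 : star M * M = 1 := U.prop.1
  have hU2 : M * star M = 1 := U.prop.2
  set T : EuclideanSpace ℂ (Fin (n-1)) →ₗ[ℂ] EuclideanSpace ℂ (Fin (n-1)) := Matrix.toEuclideanLin M with hT
  set Ti : EuclideanSpace ℂ (Fin (n-1)) →ₗ[ℂ] EuclideanSpace ℂ (Fin (n-1)) := Matrix.toEuclideanLin (star M) with hTi
  have hTiT : ∀ v, Ti (T v) = v := fun v => by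
    rw [hTi, hT, ← teL_mul_apply, hU1, teL_one_apply]
  have hTTi : ∀ v, T (Ti v) = v := fun v => by
    rw [hTi, hT, ← teL_mul_apply, hU2, teL_one_apply]
  have hTn : ∀ v, ‖T v‖ = ‖v‖ := teL_norm M hU1
  -- the multiplicative factor
  set c : EuclideanSpace ℂ (Fin (n-1)) → ℂ := fun z =>
    Complex.exp ((β : ℂ) * Complex.I)
      * Complex.exp (2 * (inner ℂ a (T z) : ℂ) + (‖a‖ : ℂ) ^ 2) with hc
  have hc0 : ∀ z : EuclideanSpace ℂ (Fin (n-1)), c z ≠ 0 := fun z =>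
    mul_ne_zero (Complex.exp_ne_zero _) (Complex.exp_ne_zero _)
  have habs : ∀ z : EuclideanSpace ℂ (Fin (n-1)), ‖c z‖
      = Real.exp (2 * (inner ℂ a (T z) : ℂ).re + ‖a‖ ^ 2) := by
    intro z
    rw [hc, norm_mul, Complex.norm_exp, Complex.norm_exp, ← Real.exp_add]
    congr 1
    simp only [Complex.add_re, Complex.mul_re, Complex.mul_I_re, ← Complex.ofReal_pow,
      Complex.ofReal_re, Complex.ofReal_im, Complex.I_re, Complex.I_im, Complex.re_ofNat, Complex.im_ofNat]
    ring
  -- norm expansion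
  have hnorm : ∀ z : EuclideanSpace ℂ (Fin (n-1)), ‖T z + a‖ ^ 2 = ‖z‖ ^ 2 + (2 * (inner ℂ a (T z) : ℂ).re + ‖a‖ ^ 2) := by
    intro z
    rw [@norm_add_sq ℂ, hTn]
    have : (inner ℂ (T z) a : ℂ).re = (inner ℂ a (T z) : ℂ).re := by
      have h := inner_re_symm (𝕜 := ℂ) (T z) a
      simpa using h
    simp only [RCLike.re_to_complex] at *
    rw [this]; ring
  -- inverse map
  set g' : EuclideanSpace ℂ (Fin (n-1)) × ℂ → EuclideanSpace ℂ (Fin (n-1)) × ℂ := fun q => (Ti (q.1 - a), q.2 / c (Ti (q.1 - a))) with hg'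
  have hmapsTo : Set.MapsTo (fun p : EuclideanSpace ℂ (Fin (n-1)) × ℂ => (T p.1 + a, c p.1 * p.2))
      {p : EuclideanSpace ℂ (Fin (n-1)) × ℂ | ‖p.2‖ = Real.exp (‖p.1‖ ^ 2)}
      {p : EuclideanSpace ℂ (Fin (n-1)) × ℂ | ‖p.2‖ = Real.exp (‖p.1‖ ^ 2)} := by
    intro p hp
    simp only [Set.mem_setOf_eq] at hp ⊢
    rw [norm_mul, hp, habs, ← Real.exp_add, hnorm]
    ring_nf
  have hmapsTo' : Set.MapsTo g'
      {p : EuclideanSpace ℂ (Fin (n-1)) × ℂ | ‖p.2‖ = Real.exp (‖p.1‖ ^ 2)}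
      {p : EuclideanSpace ℂ (Fin (n-1)) × ℂ | ‖p.2‖ = Real.exp (‖p.1‖ ^ 2)} := by
    intro q hq
    simp only [Set.mem_setOf_eq, hg'] at hq ⊢
    rw [norm_div, hq, habs]
    have h1 : T (Ti (q.1 - a)) = q.1 - a := hTTi _
    have h2 : ‖Ti (q.1 - a)‖ = ‖q.1 - a‖ := by
      have := hTn (Ti (q.1 - a)); rw [h1] at this; exact this.symm
    rw [h1, h2, ← Real.exp_sub]
    congr 1
    have h3 : ‖q.1 - a‖ ^ 2 = ‖q.1‖ ^ 2 - 2 * (inner ℂ a (q.1 - a) : ℂ).re - ‖a‖ ^ 2 := by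
      have := hnorm (Ti (q.1 - a))
      rw [h1, h2, sub_add_cancel] at this
      linarith
    linarith [h3]
  have hleft : Set.LeftInvOn g' (fun p : EuclideanSpace ℂ (Fin (n-1)) × ℂ => (T p.1 + a, c p.1 * p.2))
      {p : EuclideanSpace ℂ (Fin (n-1)) × ℂ | ‖p.2‖ = Real.exp (‖p.1‖ ^ 2)} := by
    intro p hp
    simp only [hg']
    have h1 : Ti (T p.1 + a - a) = p.1 := by rw [add_sub_cancel_right, hTiT]
    rw [h1]
    ext
    · rfl
    · exact mul_div_cancel_left₀ p.2 (hc0 p.1)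
  have hright : Set.RightInvOn g' (fun p : EuclideanSpace ℂ (Fin (n-1)) × ℂ => (T p.1 + a, c p.1 * p.2))
      {p : EuclideanSpace ℂ (Fin (n-1)) × ℂ | ‖p.2‖ = Real.exp (‖p.1‖ ^ 2)} := by
    intro q hq
    simp only [hg']
    have h1 : T (Ti (q.1 - a)) = q.1 - a := hTTi _
    ext
    · show (T (Ti (q.1 - a)) + a) _ = q.1 _
      rw [h1, sub_add_cancel]
    · exact mul_div_cancel₀ q.2 (hc0 _)
  exact Set.InvOn.bijOn ⟨hleft, hright⟩ hmapsTo hmapsTo'
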